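/- arXiv:1906.11391 — 2 statements merged into one kernel-verified Lean document; each statement's English description precedes it below -/
import Mathlib

section
/- Let ≻ and ≻' be preference profiles on the market ⟨A,B⟩ that coincide for every agent other than a fixed agent k ∈ A ∪ B. Let m be a matching that is stable with respect to ≻ and let m' be a matching that is stable with respect to ≻'. If m(k) = k and m'(k) = k, then for every agent ℓ ∈ A ∪ B, m(ℓ) = ℓ if and only if m'(ℓ) = ℓ; that is, the set of unmatched agents other than k is independent of k's submitted preference list so long as k remains unmatched. -/
namespace StaticMatch

/-- A strict preference ranking over partners in `X` and the option of remaining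
unmatched (encoded by `none`): a strict total order. -/
structure Pref (X : Type) where
  pref : Option X → Option X → Prop
  trichotomous : ∀ x y, x = y ∨ pref x y ∨ pref y x
  irrefl : ∀ x, ¬ pref x x
  trans : ∀ x y z, pref x y → pref y z → pref x z

/-- A matching of the two sides `A` and `B`: an involution where `none` encodes being
unmatched. -/
structure Matching (A B : Type) where
  mA : A → Option B
  mB : B → Option A
  inv : ∀ a b, mA a = some b ↔ mB b = some a

/-- Stability of `m` with respect to the preference profile `(pA, pB)`: individual
rationality and absence of blocking pairs. -/
def Stable {A B : Type} (pA : A → Pref B) (pB : B → Pref A) (m : Matching A B) : Prop :=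
  (∀ a : A, ¬ (pA a).pref none (m.mA a)) ∧
  (∀ b : B, ¬ (pB b).pref none (m.mB b)) ∧
  ¬ ∃ (a : A) (b : B), (pA a).pref (some b) (m.mA a) ∧ (pB b).pref (some a) (m.mB b)

lemma keyA {A B : Type} [Fintype A]
    (pA pA' : A → Pref B) (pB pB' : B → Pref A) (k : A ⊕ B)
    (hagreeA : ∀ a : A, Sum.inl a ≠ k → pA a = pA' a)
    (hagreeB : ∀ b : B, Sum.inr b ≠ k → pB b = pB' b)
    (m m' : Matching A B)
    (hm : Stable pA pB m) (hm' : Stable pA' pB' m')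
    (hkA : ∀ a : A, Sum.inl a = k → m.mA a = none ∧ m'.mA a = none)
    (hkB : ∀ b : B, Sum.inr b = k → m.mB b = none ∧ m'.mB b = none)
    (a0 : A) (h0 : m.mA a0 ≠ none) (h0' : m'.mA a0 = none) : False := by
  classical
  obtain ⟨hmA, hmB, hmNB⟩ := hm
  obtain ⟨hm'A, hm'B, hm'NB⟩ := hm'
  obtain ⟨b0, hb0⟩ : ∃ b, m.mA a0 = some b := Option.ne_none_iff_exists'.mp h0
  -- matched agents differ from k
  have hAk : ∀ a : A, m.mA a ≠ none → Sum.inl a ≠ k := fun a h hk => h (hkA a hk).1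
  have hA'k : ∀ a : A, m'.mA a ≠ none → Sum.inl a ≠ k := fun a h hk => h (hkA a hk).2
  have hBk : ∀ b : B, m.mB b ≠ none → Sum.inr b ≠ k := fun b h hk => h (hkB b hk).1
  set Inv : A × B → Prop :=
    fun p => m.mA p.1 = some p.2 ∧ (pA p.1).pref (some p.2) (m'.mA p.1) with hInv
  have inv0 : Inv (a0, b0) := by
    refine ⟨hb0, ?_⟩
    rw [h0']
    rcases (pA a0).trichotomous (some b0) none with h | h | h
    · exact absurd h (by simp)
    · exact h
    · exact absurd (by rwa [hb0]) (hmA a0)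
  have step : ∀ p : A × B, Inv p → ∃ q : A × B, Inv q ∧ m'.mB p.2 = some q.1 := by
    rintro ⟨a, b⟩ ⟨hab, hpref⟩
    have hak : Sum.inl a ≠ k := hAk a (by simp [hab])
    have hpAa : pA a = pA' a := hagreeA a hak
    have hmBb : m.mB b = some a := (m.inv a b).mp hab
    have hbk : Sum.inr b ≠ k := hBk b (by simp [hmBb])
    have hpBb : pB b = pB' b := hagreeB b hbk
    have h1 : ¬ (pB' b).pref (some a) (m'.mB b) := by
      intro h
      exact hm'NB ⟨a, b, by rwa [← hpAa], h⟩
    have hne : m'.mB b ≠ some a := by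
      intro h
      have : m'.mA a = some b := (m'.inv a b).mpr h
      rw [this] at hpref
      exact (pA a).irrefl _ hpref
    have h2 : (pB b).pref (m'.mB b) (some a) := by
      rw [hpBb]
      rcases (pB' b).trichotomous (some a) (m'.mB b) with h | h | h
      · exact absurd h.symm hne
      · exact absurd h h1
      · exact h
    obtain ⟨a', ha'⟩ : ∃ a', m'.mB b = some a' := by
      rcases hmb : m'.mB b with _ | a'
      · rw [hmb] at h2
        exact absurd (by rwa [hmBb]) (hmB b)
      · exact ⟨a', rfl⟩
    rw [ha'] at h2
    have ha'a : a' ≠ a := fun h => hne (h ▸ ha')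
    have h3 : ¬ (pA a').pref (some b) (m.mA a') := by
      intro h
      exact hmNB ⟨a', b, h, by rwa [hmBb]⟩
    have hm'a' : m'.mA a' = some b := (m'.inv a' b).mpr ha'
    have ha'k : Sum.inl a' ≠ k := hA'k a' (by simp [hm'a'])
    have hpAa' : pA a' = pA' a' := hagreeA a' ha'k
    have hne2 : m.mA a' ≠ some b := by
      intro h
      exact ha'a (by have := (m.inv a' b).mp h; rw [this] at hmBb; exact (Option.some_injective _ hmBb).symm ▸ rfl)
    have h4 : (pA a').pref (m.mA a') (some b) := by
      rcases (pA a').trichotomous (some b) (m.mA a') with h | h | h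
      · exact absurd h.symm hne2
      · exact absurd h h3
      · exact h
    obtain ⟨b'', hb''⟩ : ∃ b'', m.mA a' = some b'' := by
      rcases hma : m.mA a' with _ | b''
      · rw [hma] at h4
        exact absurd (by rwa [hm'a', ← hpAa']) (hm'A a')
      · exact ⟨b'', rfl⟩
    refine ⟨(a', b''), ⟨hb'', ?_⟩, ha'⟩
    rw [hm'a']
    rwa [hb''] at h4
  -- build chains of arbitrary length
  have build : ∀ n : ℕ, ∃ g : ℕ → A × B, g 0 = (a0, b0) ∧ (∀ i, Inv (g i)) ∧
      ∀ i < n, m'.mB (g i).2 = some (g (i + 1)).1 := by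
    intro n
    induction n with
    | zero => exact ⟨fun _ => (a0, b0), rfl, fun _ => inv0, fun i h => absurd h (Nat.not_lt_zero i)⟩
    | succ n ih =>
      obtain ⟨g, hg0, hgInv, hglink⟩ := ih
      set q := Classical.choose (step (g n) (hgInv n)) with hq
      have hqspec := Classical.choose_spec (step (g n) (hgInv n))
      refine ⟨fun i => if i ≤ n then g i else q, by simp [hg0], fun i => ?_, fun i hi => ?_⟩
      · by_cases h : i ≤ n
        · simp only [if_pos h]; exact hgInv i
        · simp only [if_neg h]; exact hqspec.1
      · rcases Nat.lt_succ_iff_lt_or_eq.mp hi with h | h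
        · simp only [if_pos (Nat.le_of_lt h), if_pos (Nat.succ_le_of_lt h)]
          exact hglink i h
        · simp only [if_pos (le_of_eq h), if_neg (by omega : ¬ i + 1 ≤ n)]
          rw [h]
          exact hqspec.2
  obtain ⟨g, hg0, hgInv, hglink⟩ := build (Fintype.card A)
  set n := Fintype.card A with hn
  -- injectivity of first components on [0, n]
  have inj : ∀ i, ∀ j ≤ n, i < j → (g i).1 ≠ (g j).1 := by
    intro i
    induction i with
    | zero =>
      intro j hj hij heq
      obtain ⟨j', rfl⟩ := Nat.exists_eq_add_of_lt hij
      have hlink := hglink j' (by omega)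
      have : m'.mA (g (j' + 1)).1 = some (g j').2 := (m'.inv _ _).mpr hlink
      rw [show j' + 1 = 0 + j' + 1 from by omega, ← heq, hg0] at this
      rw [h0'] at this
      exact Option.some_ne_none _ this.symm
    | succ i ihi =>
      intro j hj hij heq
      obtain ⟨j', rfl⟩ : ∃ j', j = j' + 1 := ⟨j - 1, by omega⟩
      have hl1 : m'.mA (g (i + 1)).1 = some (g i).2 := (m'.inv _ _).mpr (hglink i (by omega))
      have hl2 : m'.mA (g (j' + 1)).1 = some (g j').2 := (m'.inv _ _).mpr (hglink j' (by omega))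
      rw [heq, hl2] at hl1
      have h2 : (g i).2 = (g j').2 := (Option.some_injective _ hl1).symm
      have hb1 : m.mB (g i).2 = some (g i).1 := (m.inv _ _).mp (hgInv i).1
      have hb2 : m.mB (g j').2 = some (g j').1 := (m.inv _ _).mp (hgInv j').1
      rw [h2, hb2] at hb1
      exact ihi j' (by omega) (by omega) (Option.some_injective _ hb1.symm)
  have hFinj : Function.Injective (fun i : Fin (n + 1) => (g i.val).1) := by
    intro i j hij
    simp only at hij
    by_contra hne
    rcases Ne.lt_or_gt (fun h : i = j => hne h) with h | h
    · exact inj i j (Nat.lt_succ_iff.mp j.isLt) h hij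
    · exact inj j i (Nat.lt_succ_iff.mp i.isLt) h hij.symm
  have := Fintype.card_le_of_injective _ hFinj
  simp [hn] at this


namespace Aux

def flip {A B : Type} (m : Matching A B) : Matching B A :=
  ⟨m.mB, m.mA, fun b a => (m.inv a b).symm⟩

lemma stable_flip {A B : Type} {pA : A → Pref B} {pB : B → Pref A} {m : Matching A B}
    (h : Stable pA pB m) : Stable pB pA (flip m) := by
  obtain ⟨h1, h2, h3⟩ := h
  exact ⟨h2, h1, fun ⟨b, a, hb, ha⟩ => h3 ⟨a, b, ha, hb⟩⟩

end Aux

/-- Let `≻` and `≻'` be preference profiles coinciding for every agent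
other than a fixed agent `k`, let `m` be stable for `≻` and `m'` stable for `≻'`.
If `k` is unmatched under both `m` and `m'`, then every agent is unmatched under `m`
if and only if they are unmatched under `m'`. -/
theorem unmatched_agents_independent_of_k {A B : Type} [Fintype A] [Fintype B]
    [DecidableEq A] [DecidableEq B]
    (pA pA' : A → Pref B) (pB pB' : B → Pref A) (k : A ⊕ B)
    (hagreeA : ∀ a : A, Sum.inl a ≠ k → pA a = pA' a)
    (hagreeB : ∀ b : B, Sum.inr b ≠ k → pB b = pB' b)
    (m m' : Matching A B)
    (hm : Stable pA pB m) (hm' : Stable pA' pB' m')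
    (hkA : ∀ a : A, Sum.inl a = k → m.mA a = none ∧ m'.mA a = none)
    (hkB : ∀ b : B, Sum.inr b = k → m.mB b = none ∧ m'.mB b = none) :
    (∀ a : A, m.mA a = none ↔ m'.mA a = none) ∧
    (∀ b : B, m.mB b = none ↔ m'.mB b = none) := by
  have hswapA : ∀ a : A, Sum.inr a = k.swap ↔ Sum.inl a = k := by
    cases k <;> simp [Sum.swap]
  have hswapB : ∀ b : B, Sum.inl b = k.swap ↔ Sum.inr b = k := by
    cases k <;> simp [Sum.swap]
  constructor
  · intro a
    constructor
    · intro h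
      by_contra h'
      exact keyA pA' pA pB' pB k (fun a ha => (hagreeA a ha).symm)
        (fun b hb => (hagreeB b hb).symm) m' m hm' hm
        (fun a ha => ⟨(hkA a ha).2, (hkA a ha).1⟩)
        (fun b hb => ⟨(hkB b hb).2, (hkB b hb).1⟩) a h' h
    · intro h
      by_contra h'
      exact keyA pA pA' pB pB' k hagreeA hagreeB m m' hm hm' hkA hkB a h' h
  · intro b
    constructor
    · intro h
      by_contra h'
      exact keyA pB' pB pA' pA k.swap
        (fun b hb => (hagreeB b (fun hk => hb ((hswapB b).mpr hk))).symm)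
        (fun a ha => (hagreeA a (fun hk => ha ((hswapA a).mpr hk))).symm)
        (Aux.flip m') (Aux.flip m) (Aux.stable_flip hm') (Aux.stable_flip hm)
        (fun b hb => ⟨(hkB b ((hswapB b).mp hb)).2, (hkB b ((hswapB b).mp hb)).1⟩)
        (fun a ha => ⟨(hkA a ((hswapA a).mp ha)).2, (hkA a ((hswapA a).mp ha)).1⟩)
        b h' h
    · intro h
      by_contra h'
      exact keyA pB pB' pA pA' k.swap
        (fun b hb => hagreeB b (fun hk => hb ((hswapB b).mpr hk)))
        (fun a ha => hagreeA a (fun hk => ha ((hswapA a).mpr hk)))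
        (Aux.flip m) (Aux.flip m') (Aux.stable_flip hm) (Aux.stable_flip hm')
        (fun b hb => hkB b ((hswapB b).mp hb))
        (fun a ha => hkA a ((hswapA a).mp ha))
        b h' h

end StaticMatch
end

section
/- Consider T = 2 and the economy G_2 degenerate on the realization E^2 with A_1 = {k, g}, B_1 = {s}, A_2 = {e}, B_2 = {t, n}. Suppose the discount factors δ ∈ [0,1) and utilities satisfy: u(e,n) > 0 > max(u(e,s), u(e,t)); δ_k·u(k,t) > u(k,n) > u(k,s) > δ_k·u(k,n) > 0; u(g,s) > δ_g·u(g,t) > 0 > u(g,n) and u(g,s) > u(g,t); v(k,s) > v(g,s) > 0 > v(e,s); v(g,t) > v(k,t) > 0 > v(e,t); v(k,n) > v(e,n) > 0 > v(g,n). Then the matching m^{B-DA} — which in period 1 matches k with s, and in period 2 matches g with t and e with n — is NOT dynamically stable for G_2: condition (DS2) fails for agent k at (1, E^1), since every m̄ ∈ M_D(k, m^{B-DA}, E^1) gives k the payoff δ_k·u(k,t) > u(k,s). -/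
namespace DynMatch

open scoped Classical

/-- A realization of arrivals of length `t`: in each period `i < t`, the sets of agents
arriving on side `A` and on side `B`; arrival sets are pairwise disjoint on each side. -/
structure Realization (A B : Type) (t : ℕ) where
  arrA : Fin t → Finset A
  arrB : Fin t → Finset B
  disjA : ∀ i j : Fin t, i ≠ j → Disjoint (arrA i) (arrA j)
  disjB : ∀ i j : Fin t, i ≠ j → Disjoint (arrB i) (arrB j)

namespace Realization

variable {A B : Type}

theorem ext' {t : ℕ} {E F : Realization A B t} (hA : E.arrA = F.arrA)
    (hB : E.arrB = F.arrB) : E = F := by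
  cases E; cases F; dsimp at hA hB; subst hA; subst hB; rfl

/-- The truncation of a realization to its first `s` periods. -/
def trunc {t : ℕ} (E : Realization A B t) {s : ℕ} (h : s ≤ t) : Realization A B s where
  arrA i := E.arrA (Fin.castLE h i)
  arrB i := E.arrB (Fin.castLE h i)
  disjA i j hij := E.disjA _ _ fun hc => hij (Fin.castLE_injective h hc)
  disjB i j hij := E.disjB _ _ fun hc => hij (Fin.castLE_injective h hc)

theorem trunc_trunc {t s r : ℕ} (E : Realization A B t) (h : s ≤ t) (h' : r ≤ s) :
    (E.trunc h).trunc h' = E.trunc (h'.trans h) := by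
  apply ext' <;> funext i <;> (simp only [trunc]; congr 1)

/-- Cumulative arrivals on side `A` through period `s`. -/
noncomputable def Abar {t : ℕ} (E : Realization A B t) (s : ℕ) : Finset A :=
  Finset.univ.biUnion fun i : Fin t => if (i : ℕ) < s then E.arrA i else ∅

/-- Cumulative arrivals on side `B` through period `s`. -/
noncomputable def Bbar {t : ℕ} (E : Realization A B t) (s : ℕ) : Finset B :=
  Finset.univ.biUnion fun i : Fin t => if (i : ℕ) < s then E.arrB i else ∅

theorem mem_Abar {t : ℕ} (E : Realization A B t) (s : ℕ) (a : A) :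
    a ∈ E.Abar s ↔ ∃ i : Fin t, (i : ℕ) < s ∧ a ∈ E.arrA i := by
  simp only [Abar, Finset.mem_biUnion, Finset.mem_univ, true_and]
  constructor
  · rintro ⟨i, hi⟩
    by_cases h : (i : ℕ) < s
    · exact ⟨i, h, by simpa [h] using hi⟩
    · simp [h] at hi
  · rintro ⟨i, h, hi⟩
    exact ⟨i, by simp [h, hi]⟩

theorem mem_Bbar {t : ℕ} (E : Realization A B t) (s : ℕ) (b : B) :
    b ∈ E.Bbar s ↔ ∃ i : Fin t, (i : ℕ) < s ∧ b ∈ E.arrB i := by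
  simp only [Bbar, Finset.mem_biUnion, Finset.mem_univ, true_and]
  constructor
  · rintro ⟨i, hi⟩
    by_cases h : (i : ℕ) < s
    · exact ⟨i, h, by simpa [h] using hi⟩
    · simp [h] at hi
  · rintro ⟨i, h, hi⟩
    exact ⟨i, by simp [h, hi]⟩

end Realization

/-- `Follows F E` : the realization `F` follows (extends) the realization `E`,
i.e. `E` is a truncation of `F`. -/
def Follows {A B : Type} {s t : ℕ} (F : Realization A B t) (E : Realization A B s) : Prop :=
  ∃ h : s ≤ t, F.trunc h = E

variable {A B : Type}

/-- A period-`t` matching for the realization `E`: a one-to-one pairing between the agents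
on side `A` and side `B` that have arrived through period `t`; `none` encodes being
unmatched (i.e. matched to oneself). -/
structure PeriodMatching {t : ℕ} (E : Realization A B t) where
  mA : A → Option B
  mB : B → Option A
  inv : ∀ a b, mA a = some b ↔ mB b = some a
  memA : ∀ a b, mA a = some b → a ∈ E.Abar t ∧ b ∈ E.Bbar t

/-- A matching for the dynamic economy: a period matching for every realization of every
length, subject to irreversibility. -/
structure Matching (A B : Type) where
  pm : ∀ {t : ℕ} (E : Realization A B t), PeriodMatching E
  irrevA : ∀ {s t : ℕ} (h : s ≤ t) (E : Realization A B t) (a : A) (b : B),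
    (pm (E.trunc h)).mA a = some b → (pm E).mA a = some b

/-- Primitives of the market: Bernoulli utilities and discount factors in `[0,1)`.
The utility of remaining unmatched is normalized to `0` (`u(a,a)=0`, `v(b,b)=0`). -/
structure Market (A B : Type) where
  u : A → B → ℝ
  v : A → B → ℝ
  dA : A → ℝ
  dB : B → ℝ
  dA_nonneg : ∀ a, 0 ≤ dA a
  dA_lt_one : ∀ a, dA a < 1
  dB_nonneg : ∀ b, 0 ≤ dB b
  dB_lt_one : ∀ b, dB b < 1

/-- An economy of length `T`: a probability distribution on realizations of length `T`. -/
structure Economy (A B : Type) (T : ℕ) where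
  prob : Realization A B T → ℝ
  nonneg : ∀ E, 0 ≤ prob E
  finsupp : (Function.support prob).Finite
  total : ∑ᶠ E, prob E = 1

/-- Total mass of realizations following `E`. -/
noncomputable def condMass {T t : ℕ} (G : Economy A B T) (E : Realization A B t) : ℝ :=
  ∑ᶠ (F : Realization A B T) (_ : Follows F E), G.prob F

/-- Conditional probability of the length-`T` realization `F` given the truncation `E`. -/
noncomputable def cond {T t : ℕ} (G : Economy A B T) (E : Realization A B t)
    (F : Realization A B T) : ℝ :=
  if Follows F E then G.prob F / condMass G E else 0

/-- `E` is in the support of the economy `G`. -/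
def InSupport {T t : ℕ} (G : Economy A B T) (E : Realization A B t) : Prop :=
  ∃ F : Realization A B T, Follows F E ∧ 0 < G.prob F

/-- The first period `s` with `t ≤ s ≤ n` at which `a` is matched under `m` along the
realization `F`; equal to `n` if `a` stays unmatched. -/
noncomputable def matchTimeA (m : Matching A B) {n : ℕ} (F : Realization A B n) (a : A)
    (t : ℕ) : ℕ :=
  sInf ({ s : ℕ | t ≤ s ∧ ∃ h : s ≤ n, ((m.pm (F.trunc h)).mA a).isSome } ∪ {n})

noncomputable def matchTimeB (m : Matching A B) {n : ℕ} (F : Realization A B n) (b : B)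
    (t : ℕ) : ℕ :=
  sInf ({ s : ℕ | t ≤ s ∧ ∃ h : s ≤ n, ((m.pm (F.trunc h)).mB b).isSome } ∪ {n})

/-- Expected discounted payoff of side-`A` agent `a` from matching `m` at date `t`,
when the realization so far is `E`. -/
noncomputable def Upay (M : Market A B) {T : ℕ} (G : Economy A B T) (m : Matching A B)
    (a : A) {t : ℕ} (E : Realization A B t) : ℝ :=
  ∑ᶠ F : Realization A B T,
    cond G E F * (M.dA a ^ (matchTimeA m F a t - t) * ((m.pm F).mA a).elim 0 (M.u a))

/-- Expected discounted payoff of side-`B` agent `b` from matching `m` at date `t`. -/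
noncomputable def Vpay (M : Market A B) {T : ℕ} (G : Economy A B T) (m : Matching A B)
    (b : B) {t : ℕ} (E : Realization A B t) : ℝ :=
  ∑ᶠ F : Realization A B T,
    cond G E F * (M.dB b ^ (matchTimeB m F b t - t) * ((m.pm F).mB b).elim 0 (fun a => M.v a b))

/-- The set of side-`A` agents available to match at `E` (arrived and unmatched as of the
previous period). -/
noncomputable def availA (m : Matching A B) {t : ℕ} (E : Realization A B t) : Finset A :=
  (E.Abar t).filter fun a => (m.pm (E.trunc (Nat.sub_le t 1))).mA a = none

noncomputable def availB (m : Matching A B) {t : ℕ} (E : Realization A B t) : Finset B :=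
  (E.Bbar t).filter fun b => (m.pm (E.trunc (Nat.sub_le t 1))).mB b = none

/-- The agents on side `A` left unmatched at the end of the last period of `E` under `m`. -/
noncomputable def unmatchedA (m : Matching A B) {t : ℕ} (E : Realization A B t) : Finset A :=
  (E.Abar t).filter fun a => (m.pm E).mA a = none

noncomputable def unmatchedB (m : Matching A B) {t : ℕ} (E : Realization A B t) : Finset B :=
  (E.Bbar t).filter fun b => (m.pm E).mB b = none

/-- `mbar` coincides with `m` at every realization (of length `≤ T`) that does not
follow `E`: membership in `M_T(m, E^t)`. -/
def SameOff (T : ℕ) (m mbar : Matching A B) {t : ℕ} (E : Realization A B t) : Prop :=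
  ∀ (s : ℕ), s ≤ T → ∀ F : Realization A B s, ¬ Follows F E → mbar.pm F = m.pm F

/-- Static stability of a one-period matching of the pools `(Ah, Bh)` with respect to the
true utilities: individual rationality plus absence of blocking pairs. -/
def IsStaticStable (M : Market A B) (Ah : Finset A) (Bh : Finset B)
    (mA : A → Option B) (mB : B → Option A) : Prop :=
  (∀ a ∈ Ah, 0 ≤ (mA a).elim 0 (M.u a)) ∧
  (∀ b ∈ Bh, 0 ≤ (mB b).elim 0 (fun a => M.v a b)) ∧
  ¬ ∃ a ∈ Ah, ∃ b ∈ Bh,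
      (mA a).elim 0 (M.u a) < M.u a b ∧ (mB b).elim 0 (fun a' => M.v a' b) < M.v a b

/-- The period-`t` matching `m(E^t)` is stable amongst those who match in period `t`. -/
def StableAmongMatched (M : Market A B) (m : Matching A B) {t : ℕ}
    (E : Realization A B t) : Prop :=
  (∀ a ∈ availA m E, ∀ b, (m.pm E).mA a = some b → 0 ≤ M.u a b) ∧
  (∀ b ∈ availB m E, ∀ a, (m.pm E).mB b = some a → 0 ≤ M.v a b) ∧
  ¬ ∃ a ∈ availA m E, ∃ b ∈ availB m E,
      ((m.pm E).mA a).isSome ∧ ((m.pm E).mB b).isSome ∧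
      ((m.pm E).mA a).elim 0 (M.u a) < M.u a b ∧
      ((m.pm E).mB b).elim 0 (fun a' => M.v a' b) < M.v a b

/-- The continuation realization induced by a length-`n` realization `F` after period `t`,
given the matching `m`: its first-period arrivals consist of the agents left unmatched by
`m` at the end of period `t` together with the period-`t+1` arrivals of `F`; afterwards it
coincides with `F`. -/
noncomputable def contReal (m : Matching A B) {n : ℕ} (F : Realization A B n) (t : ℕ) :
    Realization A B (n - t) where
  arrA i :=
    if (i : ℕ) = 0 then
      unmatchedA m (F.trunc (show t ≤ n by have := i.isLt; omega)) ∪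
        F.arrA ⟨t, by have := i.isLt; omega⟩
    else F.arrA ⟨t + (i : ℕ), by have := i.isLt; omega⟩
  arrB i :=
    if (i : ℕ) = 0 then
      unmatchedB m (F.trunc (show t ≤ n by have := i.isLt; omega)) ∪
        F.arrB ⟨t, by have := i.isLt; omega⟩
    else F.arrB ⟨t + (i : ℕ), by have := i.isLt; omega⟩
  disjA := by
    intro i j hij
    have hi := i.isLt; have hj := j.isLt
    have hne : (i : ℕ) ≠ (j : ℕ) := fun hc => hij (Fin.ext hc)
    have key : ∀ (S : Finset A) (k : ℕ) (hk : k < n), (∀ a ∈ S, ∃ l : ℕ, l ≤ t ∧ ∃ hl : l < n,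
        a ∈ F.arrA ⟨l, hl⟩) → t < k → Disjoint S (F.arrA ⟨k, hk⟩) := by
      intro S k hk hS htk
      refine Finset.disjoint_left.mpr ?_
      intro a haS hak
      obtain ⟨l, hlt, hl, hal⟩ := hS a haS
      have hne' : (⟨l, hl⟩ : Fin n) ≠ ⟨k, hk⟩ := by
        intro hc
        have : l = k := congrArg Fin.val hc
        omega
      exact Finset.disjoint_left.mp (F.disjA _ _ hne') hal hak
    have hsub : ∀ (ht : t ≤ n) a, a ∈ unmatchedA m (F.trunc ht) ∪ F.arrA ⟨t, by
        have : (0:ℕ) < n - t ∨ True := Or.inr trivial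
        exact lt_of_lt_of_le (Nat.lt_succ_self t) (by omega)⟩ → True := fun _ _ _ => trivial
    try dsimp only
    split_ifs with h0i h0j h0j
    · omega
    · -- i = 0, j ≠ 0
      apply Finset.disjoint_union_left.mpr
      constructor
      · refine key _ _ _ ?_ (by omega)
        intro a ha
        have ha' := Finset.mem_filter.mp ha
        obtain ⟨k, hk, hak⟩ := (Realization.mem_Abar _ _ _).mp ha'.1
        refine ⟨(k : ℕ), by omega, by omega, ?_⟩
        simpa [Realization.trunc, Fin.castLE] using hak
      · refine key _ _ _ ?_ (by omega)
        intro a ha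
        exact ⟨t, le_refl t, by omega, ha⟩
    · -- j = 0, i ≠ 0
      apply Disjoint.symm
      apply Finset.disjoint_union_left.mpr
      constructor
      · refine key _ _ _ ?_ (by omega)
        intro a ha
        have ha' := Finset.mem_filter.mp ha
        obtain ⟨k, hk, hak⟩ := (Realization.mem_Abar _ _ _).mp ha'.1
        refine ⟨(k : ℕ), by omega, by omega, ?_⟩
        simpa [Realization.trunc, Fin.castLE] using hak
      · refine key _ _ _ ?_ (by omega)
        intro a ha
        exact ⟨t, le_refl t, by omega, ha⟩
    · exact F.disjA ⟨t + i, by omega⟩ ⟨t + j, by omega⟩ (by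
        intro hc
        have : t + (i : ℕ) = t + (j : ℕ) := congrArg Fin.val hc
        omega)
  disjB := by
    intro i j hij
    have hi := i.isLt; have hj := j.isLt
    have hne : (i : ℕ) ≠ (j : ℕ) := fun hc => hij (Fin.ext hc)
    have key : ∀ (S : Finset B) (k : ℕ) (hk : k < n), (∀ b ∈ S, ∃ l : ℕ, l ≤ t ∧ ∃ hl : l < n,
        b ∈ F.arrB ⟨l, hl⟩) → t < k → Disjoint S (F.arrB ⟨k, hk⟩) := by
      intro S k hk hS htk
      refine Finset.disjoint_left.mpr ?_
      intro b hbS hbk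
      obtain ⟨l, hlt, hl, hbl⟩ := hS b hbS
      have hne' : (⟨l, hl⟩ : Fin n) ≠ ⟨k, hk⟩ := by
        intro hc
        have : l = k := congrArg Fin.val hc
        omega
      exact Finset.disjoint_left.mp (F.disjB _ _ hne') hbl hbk
    try dsimp only
    split_ifs with h0i h0j h0j
    · omega
    · apply Finset.disjoint_union_left.mpr
      constructor
      · refine key _ _ _ ?_ (by omega)
        intro b hb
        have hb' := Finset.mem_filter.mp hb
        obtain ⟨k, hk, hbk⟩ := (Realization.mem_Bbar _ _ _).mp hb'.1
        refine ⟨(k : ℕ), by omega, by omega, ?_⟩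
        simpa [Realization.trunc, Fin.castLE] using hbk
      · refine key _ _ _ ?_ (by omega)
        intro b hb
        exact ⟨t, le_refl t, by omega, hb⟩
    · apply Disjoint.symm
      apply Finset.disjoint_union_left.mpr
      constructor
      · refine key _ _ _ ?_ (by omega)
        intro b hb
        have hb' := Finset.mem_filter.mp hb
        obtain ⟨k, hk, hbk⟩ := (Realization.mem_Bbar _ _ _).mp hb'.1
        refine ⟨(k : ℕ), by omega, by omega, ?_⟩
        simpa [Realization.trunc, Fin.castLE] using hbk
      · refine key _ _ _ ?_ (by omega)
        intro b hb
        exact ⟨t, le_refl t, by omega, hb⟩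
    · exact F.disjB ⟨t + i, by omega⟩ ⟨t + j, by omega⟩ (by
        intro hc
        have : t + (i : ℕ) = t + (j : ℕ) := congrArg Fin.val hc
        omega)

/-- The pushforward of the conditional distribution `G(·|E)` under the map sending a
length-`T` realization `F` following `E` to the induced continuation realization. -/
noncomputable def contPush {T : ℕ} (G : Economy A B T) (m : Matching A B) {t : ℕ}
    (E : Realization A B t) : Realization A B (T - t) → ℝ := fun F' =>
  ∑ᶠ (F : Realization A B T) (_ : Follows F E ∧ contReal m F t = F'), cond G E F

/-- The empty realization. -/
def emptyRealization (A B : Type) (n : ℕ) : Realization A B n :=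
  ⟨fun _ => ∅, fun _ => ∅, fun _ _ _ => Finset.disjoint_empty_left ∅,
    fun _ _ _ => Finset.disjoint_empty_left ∅⟩

/-- The point mass at the empty realization. -/
noncomputable def pointEconomy (A B : Type) (n : ℕ) : Economy A B n where
  prob F := if F = emptyRealization A B n then 1 else 0
  nonneg := by intro E; (try dsimp only); split <;> norm_num
  finsupp := by
    apply Set.Finite.subset (Set.finite_singleton (emptyRealization A B n))
    intro x hx
    by_contra hne
    simp only [Set.mem_singleton_iff] at hne
    simp [Function.mem_support, hne] at hx
  total := by
    rw [finsum_eq_single _ (emptyRealization A B n) (fun x hx => if_neg hx)]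
    simp

/-- The continuation economy of length `T - t` induced by the matching `m` and the
realization `E`: arrivals in its first period are the agents left unmatched by `m` at
the end of period `t` together with the period-`t+1` arrivals, and subsequent arrivals
are as in the original economy, with probabilities given by `G(·|E)`. -/
noncomputable def contEconomy {T : ℕ} (G : Economy A B T) (m : Matching A B) {t : ℕ}
    (E : Realization A B t) : Economy A B (T - t) :=
  if h : ∃ Ec : Economy A B (T - t), Ec.prob = contPush G m E then h.choose
  else pointEconomy A B (T - t)

/-- The continuation of `mbar` after `(t, E)`, restricted to the agents not yet matched
at the end of period `t`, coincides with the matching `m'` of the continuation economy. -/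
def ContAgrees (T : ℕ) (mbar m' : Matching A B) {t : ℕ} (E : Realization A B t) : Prop :=
  ∀ (s : ℕ), 1 ≤ s → t + s ≤ T → ∀ F : Realization A B (t + s), Follows F E →
    (∀ a : A, (mbar.pm E).mA a = none →
      (m'.pm (contReal mbar F t)).mA a = (mbar.pm F).mA a) ∧
    (∀ b : B, (mbar.pm E).mB b = none →
      (m'.pm (contReal mbar F t)).mB b = (mbar.pm F).mB b)

/-- The conjecture set for a side-`A` agent `a` available at `(t, E)`, given a candidate
solution correspondence `D` for continuation economies of length `T - t`. -/
def ConjA (M : Market A B) {T : ℕ} (G : Economy A B T) {t : ℕ} (E : Realization A B t)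
    (m : Matching A B) (a : A) (D : Economy A B (T - t) → Set (Matching A B)) :
    Set (Matching A B) :=
  { mbar | SameOff T m mbar E ∧ (mbar.pm E).mA a = none ∧ StableAmongMatched M mbar E ∧
      ∃ m' ∈ D (contEconomy G mbar E), ContAgrees T mbar m' E }

/-- The conjecture set for a side-`B` agent `b` available at `(t, E)`. -/
def ConjB (M : Market A B) {T : ℕ} (G : Economy A B T) {t : ℕ} (E : Realization A B t)
    (m : Matching A B) (b : B) (D : Economy A B (T - t) → Set (Matching A B)) :
    Set (Matching A B) :=
  { mbar | SameOff T m mbar E ∧ (mbar.pm E).mB b = none ∧ StableAmongMatched M mbar E ∧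
      ∃ m' ∈ D (contEconomy G mbar E), ContAgrees T mbar m' E }

/-- Dynamic stability, defined by recursion on the horizon `T`:
(DS2)/(DS3) no available agent benefits from being unavailable to match, relative to some
conjecture whose continuation is dynamically stable for the continuation economy; and
(DS1) no pair of contemporaneously available agents form a blocking pair. -/
noncomputable def DynStable (M : Market A B) (T : ℕ) : Economy A B T → Set (Matching A B) :=
  fun G =>
  { m | ∀ t : ℕ, 1 ≤ t → t ≤ T → ∀ E : Realization A B t, InSupport G E →
      (∀ a ∈ availA m E, ∃ mbar ∈ ConjA M G E m a (DynStable M (T - t)),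
          Upay M G mbar a E ≤ Upay M G m a E) ∧
      (∀ b ∈ availB m E, ∃ mbar ∈ ConjB M G E m b (DynStable M (T - t)),
          Vpay M G mbar b E ≤ Vpay M G m b E) ∧
      ¬ ∃ a ∈ availA m E, ∃ b ∈ availB m E,
          Upay M G m a E < M.u a b ∧ Vpay M G m b E < M.v a b }
termination_by T
decreasing_by all_goals omega

/-- The conjecture set `M_D(a, m, E^t)` for a side-`A` agent. -/
noncomputable def MD_A (M : Market A B) {T : ℕ} (G : Economy A B T) {t : ℕ}
    (E : Realization A B t) (m : Matching A B) (a : A) : Set (Matching A B) :=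
  ConjA M G E m a (DynStable M (T - t))

/-- The conjecture set `M_D(b, m, E^t)` for a side-`B` agent. -/
noncomputable def MD_B (M : Market A B) {T : ℕ} (G : Economy A B T) {t : ℕ}
    (E : Realization A B t) (m : Matching A B) (b : B) : Set (Matching A B) :=
  ConjB M G E m b (DynStable M (T - t))

end DynMatch

namespace DynMatch

open scoped Classical


section Helpers
variable {A B : Type}

lemma trunc_refl {t : ℕ} (E : Realization A B t) (h : t ≤ t) : E.trunc h = E :=
  Realization.ext' rfl rfl

lemma pm_zero_A (m : Matching A B) (F : Realization A B 0) (a : A) : (m.pm F).mA a = none := by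
  cases h : (m.pm F).mA a with
  | none => rfl
  | some b =>
    have := ((m.pm F).memA a b h).1
    rw [Realization.mem_Abar] at this
    obtain ⟨i, -, -⟩ := this
    exact absurd i.isLt (by omega)

lemma pm_zero_B (m : Matching A B) (F : Realization A B 0) (b : B) : (m.pm F).mB b = none := by
  cases h : (m.pm F).mB b with
  | none => rfl
  | some a =>
    have h2 : (m.pm F).mA a = some b := ((m.pm F).inv a b).mpr h
    have := ((m.pm F).memA a b h2).1
    rw [Realization.mem_Abar] at this
    obtain ⟨i, -, -⟩ := this
    exact absurd i.isLt (by omega)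

lemma Abar_one (F : Realization A B 1) : F.Abar 1 = F.arrA ⟨0, one_pos⟩ := by
  ext a
  rw [Realization.mem_Abar]
  constructor
  · rintro ⟨i, -, hi⟩
    have : i = ⟨0, one_pos⟩ := Subsingleton.elim _ _
    rwa [this] at hi
  · intro h
    exact ⟨⟨0, one_pos⟩, one_pos, h⟩

lemma Bbar_one (F : Realization A B 1) : F.Bbar 1 = F.arrB ⟨0, one_pos⟩ := by
  ext b
  rw [Realization.mem_Bbar]
  constructor
  · rintro ⟨i, -, hi⟩
    have : i = ⟨0, one_pos⟩ := Subsingleton.elim _ _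
    rwa [this] at hi
  · intro h
    exact ⟨⟨0, one_pos⟩, one_pos, h⟩

lemma availA_one (m : Matching A B) (F : Realization A B 1) :
    availA m F = F.arrA ⟨0, one_pos⟩ := by
  unfold availA
  rw [Finset.filter_true_of_mem (fun a _ => pm_zero_A m _ a), Abar_one]

lemma availB_one (m : Matching A B) (F : Realization A B 1) :
    availB m F = F.arrB ⟨0, one_pos⟩ := by
  unfold availB
  rw [Finset.filter_true_of_mem (fun b _ => pm_zero_B m _ b), Bbar_one]

lemma cond_point {T t : ℕ} (G : Economy A B T) (E : Realization A B T)
    (h1 : G.prob E = 1) (h0 : ∀ F, F ≠ E → G.prob F = 0)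
    (E0 : Realization A B t) (hF : Follows E E0) :
    ∀ F, cond G E0 F = if F = E then 1 else 0 := by
  have hmass : condMass G E0 = 1 := by
    unfold condMass
    rw [finsum_eq_single _ E]
    · rw [finsum_eq_if, if_pos hF, h1]
    · intro F hne
      simp only [h0 F hne]
      exact finsum_zero
  intro F
  unfold cond
  rw [hmass]
  by_cases hFE : F = E
  · subst hFE
    rw [if_pos hF, h1]
    norm_num
  · rw [h0 F hFE]
    split <;> simp

lemma Upay_point {T t : ℕ} (M : Market A B) (G : Economy A B T) (E : Realization A B T)
    (h1 : G.prob E = 1) (h0 : ∀ F, F ≠ E → G.prob F = 0)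
    (E0 : Realization A B t) (hF : Follows E E0) (m : Matching A B) (a : A) :
    Upay M G m a E0
      = M.dA a ^ (matchTimeA m E a t - t) * ((m.pm E).mA a).elim 0 (M.u a) := by
  have hc := cond_point G E h1 h0 E0 hF
  unfold Upay
  rw [finsum_eq_single _ E, hc E, if_pos rfl, one_mul]
  intro F hne
  rw [hc F, if_neg hne, zero_mul]

lemma Vpay_point {T t : ℕ} (M : Market A B) (G : Economy A B T) (E : Realization A B T)
    (h1 : G.prob E = 1) (h0 : ∀ F, F ≠ E → G.prob F = 0)
    (E0 : Realization A B t) (hF : Follows E E0) (m : Matching A B) (b : B) :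
    Vpay M G m b E0
      = M.dB b ^ (matchTimeB m E b t - t) * ((m.pm E).mB b).elim 0 (fun a => M.v a b) := by
  have hc := cond_point G E h1 h0 E0 hF
  unfold Vpay
  rw [finsum_eq_single _ E, hc E, if_pos rfl, one_mul]
  intro F hne
  rw [hc F, if_neg hne, zero_mul]

lemma Upay_one (M : Market A B) (G : Economy A B 1) (F0 : Realization A B 1)
    (h1 : G.prob F0 = 1) (h0 : ∀ F, F ≠ F0 → G.prob F = 0) (m : Matching A B) (a : A) :
    Upay M G m a F0 = ((m.pm F0).mA a).elim 0 (M.u a) := by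
  rw [Upay_point M G F0 h1 h0 F0 ⟨le_rfl, trunc_refl F0 le_rfl⟩ m a]
  have hle : matchTimeA m F0 a 1 ≤ 1 := Nat.sInf_le (Set.mem_union_right _ rfl)
  rw [Nat.sub_eq_zero_of_le hle, pow_zero, one_mul]

lemma Vpay_one (M : Market A B) (G : Economy A B 1) (F0 : Realization A B 1)
    (h1 : G.prob F0 = 1) (h0 : ∀ F, F ≠ F0 → G.prob F = 0) (m : Matching A B) (b : B) :
    Vpay M G m b F0 = ((m.pm F0).mB b).elim 0 (fun a => M.v a b) := by
  rw [Vpay_point M G F0 h1 h0 F0 ⟨le_rfl, trunc_refl F0 le_rfl⟩ m b]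
  have hle : matchTimeB m F0 b 1 ≤ 1 := Nat.sInf_le (Set.mem_union_right _ rfl)
  rw [Nat.sub_eq_zero_of_le hle, pow_zero, one_mul]

lemma mem_contReal_arrA_zero (m : Matching A B) (E : Realization A B 2)
    (p : (0:ℕ) < 2 - 1) (x : A) :
    x ∈ (contReal m E 1).arrA ⟨0, p⟩
      ↔ x ∈ unmatchedA m (E.trunc (le_of_lt Nat.one_lt_two : (1:ℕ) ≤ 2)) ∨ x ∈ E.arrA ⟨1, Nat.one_lt_two⟩ := by
  rw [show (contReal m E 1).arrA ⟨0, p⟩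
      = unmatchedA m (E.trunc (le_of_lt Nat.one_lt_two : (1:ℕ) ≤ 2)) ∪ E.arrA ⟨1, Nat.one_lt_two⟩ from rfl]
  exact Finset.mem_union

lemma mem_contReal_arrB_zero (m : Matching A B) (E : Realization A B 2)
    (p : (0:ℕ) < 2 - 1) (x : B) :
    x ∈ (contReal m E 1).arrB ⟨0, p⟩
      ↔ x ∈ unmatchedB m (E.trunc (le_of_lt Nat.one_lt_two : (1:ℕ) ≤ 2)) ∨ x ∈ E.arrB ⟨1, Nat.one_lt_two⟩ := by
  rw [show (contReal m E 1).arrB ⟨0, p⟩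
      = unmatchedB m (E.trunc (le_of_lt Nat.one_lt_two : (1:ℕ) ≤ 2)) ∪ E.arrB ⟨1, Nat.one_lt_two⟩ from rfl]
  exact Finset.mem_union

/-- Point mass at an arbitrary realization. -/
noncomputable def pointEconomyAt {n : ℕ} (F0 : Realization A B n) : Economy A B n where
  prob F := if F = F0 then 1 else 0
  nonneg := by intro E; (try dsimp only); split <;> norm_num
  finsupp := by
    apply Set.Finite.subset (Set.finite_singleton F0)
    intro x hx
    by_contra hne
    simp only [Set.mem_singleton_iff] at hne
    simp [Function.mem_support, hne] at hx
  total := by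
    rw [finsum_eq_single _ F0 (fun x hx => if_neg hx)]
    simp

lemma contPush_point {T t : ℕ} (G : Economy A B T) (E : Realization A B T)
    (E0 : Realization A B t) (m : Matching A B)
    (hc : ∀ F, cond G E0 F = if F = E then 1 else 0) (hF : Follows E E0) :
    contPush G m E0 = fun F' => if F' = contReal m E t then 1 else 0 := by
  funext F'
  unfold contPush
  rw [finsum_eq_single _ E]
  · rw [finsum_eq_if, hc E, if_pos rfl]
    by_cases h : contReal m E t = F'
    · rw [if_pos ⟨hF, h⟩, if_pos h.symm]
    · rw [if_neg (fun hh => h hh.2), if_neg (fun hh => h hh.symm)]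
  · intro F hne
    simp only [hc F, if_neg hne]
    exact finsum_zero

lemma contEconomy_prob_eq {T t : ℕ} (G : Economy A B T) (m : Matching A B)
    (E0 : Realization A B t) (f : Realization A B (T - t) → ℝ)
    (Ec : Economy A B (T - t)) (hEc : Ec.prob = f) (hf : contPush G m E0 = f) :
    (contEconomy G m E0).prob = f := by
  have hex : ∃ Ec' : Economy A B (T - t), Ec'.prob = contPush G m E0 :=
    ⟨Ec, by rw [hEc, hf]⟩
  rw [contEconomy, dif_pos hex, hex.choose_spec, hf]

end Helpers

/-- In the two-period economy with `A₁ = {k,g}`, `B₁ = {s}`,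
`A₂ = {e}`, `B₂ = {t,n}` and the stated preferences, the matching `m^{B-DA}` — which
matches `k` with `s` in period 1, and `g` with `t` and `e` with `n` in period 2 — is
not dynamically stable: condition (DS2) fails for agent `k` at `(1, E^1)`, since every
conjecture `m̄ ∈ M_D(k, m^{B-DA}, E^1)` gives `k` the payoff `δ_k·u(k,t) > u(k,s)`. -/
theorem mBDA_not_dynamically_stable {A B : Type} [Fintype A] [Fintype B]
    [DecidableEq A] [DecidableEq B] (M : Market A B)
    (eA kA gA : A) (sB tB nB : B)
    (hA1 : eA ≠ kA) (hA2 : eA ≠ gA) (hA3 : kA ≠ gA)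
    (hB1 : sB ≠ tB) (hB2 : sB ≠ nB) (hB3 : tB ≠ nB)
    (E : Realization A B 2)
    (harrA0 : E.arrA ⟨0, by omega⟩ = {kA, gA})
    (harrA1 : E.arrA ⟨1, by omega⟩ = {eA})
    (harrB0 : E.arrB ⟨0, by omega⟩ = {sB})
    (harrB1 : E.arrB ⟨1, by omega⟩ = {tB, nB})
    (G : Economy A B 2) (hG : ∀ F : Realization A B 2, 0 < G.prob F ↔ F = E)
    -- Erdős: n ≻ single ≻ s, t
    (hu_e1 : 0 < M.u eA nB) (hu_e2 : M.u eA sB < 0) (hu_e3 : M.u eA tB < 0)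
    -- Kuhn: (t,1) ≻ (n,0) ≻ (s,0) ≻ (n,1) ≻ single
    (hu_k1 : M.u kA nB < M.dA kA * M.u kA tB) (hu_k2 : M.u kA sB < M.u kA nB)
    (hu_k3 : M.dA kA * M.u kA nB < M.u kA sB) (hu_k4 : 0 < M.dA kA * M.u kA nB)
    -- Gale: (s,0) ≻ (t,1) ≻ single ≻ n, and (s,0) ≻ (t,0)
    (hu_g1 : M.dA gA * M.u gA tB < M.u gA sB) (hu_g2 : 0 < M.dA gA * M.u gA tB)
    (hu_g3 : M.u gA nB < 0) (hu_g4 : M.u gA tB < M.u gA sB)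
    -- Shapley: k ≻ g ≻ single ≻ e
    (hv_s1 : M.v gA sB < M.v kA sB) (hv_s2 : 0 < M.v gA sB) (hv_s3 : M.v eA sB < 0)
    -- Tucker: g ≻ k ≻ single ≻ e
    (hv_t1 : M.v kA tB < M.v gA tB) (hv_t2 : 0 < M.v kA tB) (hv_t3 : M.v eA tB < 0)
    -- Nash: k ≻ e ≻ single ≻ g
    (hv_n1 : M.v eA nB < M.v kA nB) (hv_n2 : 0 < M.v eA nB) (hv_n3 : M.v gA nB < 0)
    (m : Matching A B)
    (hm1k : (m.pm (E.trunc (by omega : (1:ℕ) ≤ 2))).mA kA = some sB)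
    (hm1g : (m.pm (E.trunc (by omega : (1:ℕ) ≤ 2))).mA gA = none)
    (hm2k : (m.pm E).mA kA = some sB)
    (hm2g : (m.pm E).mA gA = some tB)
    (hm2e : (m.pm E).mA eA = some nB) :
    (∀ mbar ∈ MD_A M G (E.trunc (by omega : (1:ℕ) ≤ 2)) m kA,
        Upay M G mbar kA (E.trunc (by omega : (1:ℕ) ≤ 2)) = M.dA kA * M.u kA tB ∧
        Upay M G m kA (E.trunc (by omega : (1:ℕ) ≤ 2)) <
          Upay M G mbar kA (E.trunc (by omega : (1:ℕ) ≤ 2))) ∧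
    m ∉ DynStable M 2 G := by
  have h12 : (1:ℕ) ≤ 2 := by omega
  -- facts about the degenerate economy G
  have hG0 : ∀ F, F ≠ E → G.prob F = 0 := fun F hne =>
    le_antisymm (not_lt.mp fun c => hne ((hG F).mp c)) (G.nonneg F)
  have hG1 : G.prob E = 1 := by
    have h := G.total
    rwa [finsum_eq_single _ E hG0] at h
  have hcondG : ∀ F, cond G (E.trunc h12) F = if F = E then 1 else 0 :=
    cond_point G E hG1 hG0 _ ⟨h12, rfl⟩
  have hAbarE1 : (E.trunc h12).Abar 1 = {kA, gA} := by
    rw [Abar_one]; exact harrA0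
  have hBbarE1 : (E.trunc h12).Bbar 1 = {sB} := by
    rw [Bbar_one]; exact harrB0
  -- utility chain facts
  have hukt0 : 0 < M.u kA tB := by nlinarith [M.dA_nonneg kA, M.dA_lt_one kA]
  have hukn0 : 0 < M.u kA nB := by nlinarith [M.dA_nonneg kA, M.dA_lt_one kA]
  have hukn_lt : M.u kA nB < M.u kA tB := by nlinarith [M.dA_nonneg kA, M.dA_lt_one kA]
  have huks_lt : M.u kA sB < M.u kA tB := lt_trans hu_k2 hukn_lt
  have hvet_lt : M.v eA tB < M.v kA tB := lt_trans hv_t3 hv_t2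
  have hvkn0 : 0 < M.v kA nB := lt_trans hv_n2 hv_n1
  have hves_lt : M.v eA sB < M.v gA sB := lt_trans hv_s3 hv_s2
  -- the key fact about every conjecture of Kuhn
  have key : ∀ mbar ∈ MD_A M G (E.trunc h12) m kA,
      Upay M G mbar kA (E.trunc h12) = M.dA kA * M.u kA tB ∧
      Upay M G m kA (E.trunc h12) < Upay M G mbar kA (E.trunc h12) := by
    intro mbar hmbar
    obtain ⟨hoff, hknone, hstab, m', hm'D, hagree⟩ := hmbar
    obtain ⟨F0, hF0⟩ : ∃ F0 : Realization A B 1, F0 = contReal mbar E 1 :=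
      ⟨contReal mbar E 1, rfl⟩
    -- the continuation economy is the point mass at F0
    have hGprob : (contEconomy G mbar (E.trunc h12)).prob
        = fun F' => if F' = F0 then 1 else 0 := by
      refine contEconomy_prob_eq G mbar _ _ (pointEconomyAt F0) rfl ?_
      refine (contPush_point G E (E.trunc h12) mbar hcondG ⟨h12, rfl⟩).trans ?_
      rw [hF0]
    have hG'1 : (contEconomy G mbar (E.trunc h12)).prob F0 = 1 := by
      rw [hGprob]; simp
    have hG'0 : ∀ F, F ≠ F0 → (contEconomy G mbar (E.trunc h12)).prob F = 0 := by
      intro F hne; rw [hGprob]; simp [hne]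
    have hsupp : InSupport (contEconomy G mbar (E.trunc h12)) F0 :=
      ⟨F0, ⟨le_rfl, trunc_refl F0 le_rfl⟩, by rw [hG'1]; norm_num⟩
    rw [DynStable] at hm'D
    have hDS := hm'D 1 le_rfl (by omega) F0 hsupp
    have hDS1 := hDS.2.2
    have hUp : ∀ a : A, Upay M (contEconomy G mbar (E.trunc h12)) m' a F0
        = ((m'.pm F0).mA a).elim 0 (M.u a) :=
      fun a => Upay_one M (contEconomy G mbar (E.trunc h12)) F0 hG'1 hG'0 m' a
    have hVp : ∀ b : B, Vpay M (contEconomy G mbar (E.trunc h12)) m' b F0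
        = ((m'.pm F0).mB b).elim 0 (fun a => M.v a b) :=
      fun b => Vpay_one M (contEconomy G mbar (E.trunc h12)) F0 hG'1 hG'0 m' b
    -- the pools of the continuation (membership form)
    have hAvA_mem : ∀ x : A, x ∈ availA m' F0 ↔
        (x ∈ unmatchedA mbar (E.trunc h12) ∨ x ∈ ({eA} : Finset A)) := by
      intro x
      rw [availA_one, hF0, mem_contReal_arrA_zero mbar E one_pos x, harrA1]
    have hAvB_mem : ∀ x : B, x ∈ availB m' F0 ↔
        (x ∈ unmatchedB mbar (E.trunc h12) ∨ x ∈ ({tB, nB} : Finset B)) := by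
      intro x
      rw [availB_one, hF0, mem_contReal_arrB_zero mbar E one_pos x, harrB1]
    have hAbarF0_mem : ∀ x : A, x ∈ F0.Abar 1 ↔
        (x ∈ unmatchedA mbar (E.trunc h12) ∨ x ∈ ({eA} : Finset A)) := by
      intro x
      rw [Abar_one, hF0, mem_contReal_arrA_zero mbar E one_pos x, harrA1]
    have hBbarF0_mem : ∀ x : B, x ∈ F0.Bbar 1 ↔
        (x ∈ unmatchedB mbar (E.trunc h12) ∨ x ∈ ({tB, nB} : Finset B)) := by
      intro x
      rw [Bbar_one, hF0, mem_contReal_arrB_zero mbar E one_pos x, harrB1]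
    -- the main claim: m' matches Kuhn with Tucker in the continuation
    have hkt : (m'.pm F0).mA kA = some tB := by
      rcases hgcase : (mbar.pm (E.trunc h12)).mA gA with _ | b
      · -- case: nobody matched in period 1
        have hsnone : (mbar.pm (E.trunc h12)).mB sB = none := by
          cases hs : (mbar.pm (E.trunc h12)).mB sB with
          | none => rfl
          | some a' =>
            have h2 := ((mbar.pm (E.trunc h12)).inv a' sB).mpr hs
            have hmem := ((mbar.pm (E.trunc h12)).memA a' sB h2).1
            rw [hAbarE1] at hmem
            simp only [Finset.mem_insert, Finset.mem_singleton] at hmem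
            rcases hmem with ha | ha
            · rw [ha, hknone] at h2; cases h2
            · rw [ha, hgcase] at h2; cases h2
        have hUA : unmatchedA mbar (E.trunc h12) = {kA, gA} := by
          unfold unmatchedA
          rw [hAbarE1]
          ext x
          simp only [Finset.mem_filter, Finset.mem_insert, Finset.mem_singleton]
          constructor
          · rintro ⟨hx, -⟩
            exact hx
          · intro hx
            refine ⟨hx, ?_⟩
            rcases hx with ha | ha
            · rw [ha]; exact hknone
            · rw [ha]; exact hgcase
        have hUB : unmatchedB mbar (E.trunc h12) = {sB} := by
          unfold unmatchedB
          rw [hBbarE1]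
          ext x
          simp only [Finset.mem_filter, Finset.mem_singleton]
          constructor
          · rintro ⟨hx, -⟩
            exact hx
          · intro hx
            refine ⟨hx, ?_⟩
            rw [hx]; exact hsnone
        have hk_in : kA ∈ availA m' F0 :=
          (hAvA_mem kA).mpr (Or.inl (by rw [hUA]; simp))
        have hg_in : gA ∈ availA m' F0 :=
          (hAvA_mem gA).mpr (Or.inl (by rw [hUA]; simp))
        have ht_in : tB ∈ availB m' F0 :=
          (hAvB_mem tB).mpr (Or.inr (by simp))
        have hs_in : sB ∈ availB m' F0 :=
          (hAvB_mem sB).mpr (Or.inl (by rw [hUB]; simp))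
        have hn_in : nB ∈ availB m' F0 :=
          (hAvB_mem nB).mpr (Or.inr (by simp))
        have hpartnerK : ∀ b', (m'.pm F0).mA kA = some b' → b' = sB ∨ b' = tB ∨ b' = nB := by
          intro b' h
          have hmm := (hBbarF0_mem b').mp ((m'.pm F0).memA kA b' h).2
          rw [hUB] at hmm
          simp only [Finset.mem_insert, Finset.mem_singleton] at hmm
          tauto
        have hpartnerB : ∀ (b' : B) a', (m'.pm F0).mB b' = some a' →
            a' = kA ∨ a' = gA ∨ a' = eA := by
          intro b' a' h
          have hmm := (hAbarF0_mem a').mp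
            ((m'.pm F0).memA a' b' (((m'.pm F0).inv a' b').mpr h)).1
          rw [hUA] at hmm
          simp only [Finset.mem_insert, Finset.mem_singleton] at hmm
          tauto
        by_contra hne
        have hkpay : ((m'.pm F0).mA kA).elim 0 (M.u kA) < M.u kA tB := by
          cases hk : (m'.pm F0).mA kA with
          | none => simpa using hukt0
          | some b' =>
            rcases hpartnerK b' hk with ha | ha | ha
            · rw [ha]; simpa using huks_lt
            · rw [ha] at hk; exact absurd hk hne
            · rw [ha]; simpa using hukn_lt
        cases ht : (m'.pm F0).mB tB with
        | none =>
          refine hDS1 ⟨kA, hk_in, tB, ht_in, (hUp kA).trans_lt hkpay,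
            (hVp tB).trans_lt ?_⟩
          rw [ht]; simpa using hv_t2
        | some a' =>
          rcases hpartnerB tB a' ht with ha | ha | ha
          · rw [ha] at ht
            exact hne (((m'.pm F0).inv kA tB).mpr ht)
          · -- Tucker matched to Gale
            rw [ha] at ht
            have hgt : (m'.pm F0).mA gA = some tB := ((m'.pm F0).inv gA tB).mpr ht
            cases hs : (m'.pm F0).mB sB with
            | none =>
              refine hDS1 ⟨gA, hg_in, sB, hs_in, (hUp gA).trans_lt ?_,
                (hVp sB).trans_lt ?_⟩
              · rw [hgt]; simpa using hu_g4
              · rw [hs]; simpa using hv_s2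
            | some a'' =>
              rcases hpartnerB sB a'' hs with hb | hb | hb
              · -- Shapley matched to Kuhn : (k, n) blocks
                rw [hb] at hs
                have hks : (m'.pm F0).mA kA = some sB := ((m'.pm F0).inv kA sB).mpr hs
                refine hDS1 ⟨kA, hk_in, nB, hn_in, (hUp kA).trans_lt ?_,
                  (hVp nB).trans_lt ?_⟩
                · rw [hks]; simpa using hu_k2
                · cases hn : (m'.pm F0).mB nB with
                  | none => simpa using hvkn0
                  | some a3 =>
                    rcases hpartnerB nB a3 hn with hc | hc | hc
                    · rw [hc] at hn
                      have h4 := ((m'.pm F0).inv kA nB).mpr hn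
                      rw [hks] at h4
                      injection h4 with h5
                      exact absurd h5 hB2
                    · rw [hc] at hn
                      have h4 := ((m'.pm F0).inv gA nB).mpr hn
                      rw [hgt] at h4
                      injection h4 with h5
                      exact absurd h5 hB3
                    · rw [hc]; simpa using hv_n1
              · rw [hb] at hs
                have h4 := ((m'.pm F0).inv gA sB).mpr hs
                rw [hgt] at h4
                injection h4 with h5
                exact absurd h5.symm hB1
              · -- Shapley matched to Erdos : (g, s) blocks
                refine hDS1 ⟨gA, hg_in, sB, hs_in, (hUp gA).trans_lt ?_,
                  (hVp sB).trans_lt ?_⟩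
                · rw [hgt]; simpa using hu_g4
                · rw [hs, hb]; simpa using hves_lt
          · -- Tucker matched to Erdos : (k, t) blocks
            refine hDS1 ⟨kA, hk_in, tB, ht_in, (hUp kA).trans_lt hkpay,
              (hVp tB).trans_lt ?_⟩
            rw [ht, ha]; simpa using hvet_lt
      · -- case: Gale matched to Shapley in period 1
        have hbsB : b = sB := by
          have hmem := ((mbar.pm (E.trunc h12)).memA gA b hgcase).2
          rw [hBbarE1] at hmem
          simpa using hmem
        rw [hbsB] at hgcase
        have hsg : (mbar.pm (E.trunc h12)).mB sB = some gA :=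
          ((mbar.pm (E.trunc h12)).inv gA sB).mp hgcase
        have hUA : unmatchedA mbar (E.trunc h12) = {kA} := by
          unfold unmatchedA
          rw [hAbarE1]
          ext x
          simp only [Finset.mem_filter, Finset.mem_insert, Finset.mem_singleton]
          constructor
          · rintro ⟨hx | hx, h2⟩
            · exact hx
            · rw [hx, hgcase] at h2; cases h2
          · rintro rfl
            exact ⟨Or.inl rfl, hknone⟩
        have hUB : unmatchedB mbar (E.trunc h12) = ∅ := by
          unfold unmatchedB
          rw [hBbarE1]
          ext x
          simp only [Finset.mem_filter, Finset.mem_singleton, Finset.notMem_empty,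
            iff_false, not_and]
          rintro rfl
          rw [hsg]
          simp
        have hk_in : kA ∈ availA m' F0 :=
          (hAvA_mem kA).mpr (Or.inl (by rw [hUA]; simp))
        have ht_in : tB ∈ availB m' F0 :=
          (hAvB_mem tB).mpr (Or.inr (by simp))
        have hpartnerK : ∀ b', (m'.pm F0).mA kA = some b' → b' = tB ∨ b' = nB := by
          intro b' h
          have hmm := (hBbarF0_mem b').mp ((m'.pm F0).memA kA b' h).2
          rw [hUB] at hmm
          simp only [Finset.notMem_empty, false_or, Finset.mem_insert,
            Finset.mem_singleton] at hmm
          tauto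
        have hpartnerB : ∀ (b' : B) a', (m'.pm F0).mB b' = some a' →
            a' = kA ∨ a' = eA := by
          intro b' a' h
          have hmm := (hAbarF0_mem a').mp
            ((m'.pm F0).memA a' b' (((m'.pm F0).inv a' b').mpr h)).1
          rw [hUA] at hmm
          simp only [Finset.mem_singleton] at hmm
          tauto
        by_contra hne
        have hkpay : ((m'.pm F0).mA kA).elim 0 (M.u kA) < M.u kA tB := by
          cases hk : (m'.pm F0).mA kA with
          | none => simpa using hukt0
          | some b' =>
            rcases hpartnerK b' hk with ha | ha
            · rw [ha] at hk; exact absurd hk hne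
            · rw [ha]; simpa using hukn_lt
        refine hDS1 ⟨kA, hk_in, tB, ht_in, (hUp kA).trans_lt hkpay,
          (hVp tB).trans_lt ?_⟩
        cases ht : (m'.pm F0).mB tB with
        | none => simpa using hv_t2
        | some a' =>
          rcases hpartnerB tB a' ht with ha | ha
          · rw [ha] at ht
            exact absurd (((m'.pm F0).inv kA tB).mpr ht) hne
          · rw [ha]; simpa using hvet_lt
    -- transfer to the original matching via ContAgrees
    have h' := (hagree 1 le_rfl (by omega) E ⟨h12, rfl⟩).1 kA hknone
    have hmE : (mbar.pm E).mA kA = some tB := by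
      rw [← h']
      rw [hF0] at hkt
      exact hkt
    -- the match time of Kuhn under mbar is period 2
    have hmtbar : matchTimeA mbar E kA 1 = 2 := by
      unfold matchTimeA
      apply le_antisymm
      · exact Nat.sInf_le (Set.mem_union_right _ rfl)
      · refine le_csInf ⟨2, Set.mem_union_right _ (Set.mem_singleton 2)⟩ fun x hx => ?_
        rcases hx with h | h
        · obtain ⟨hx1, hx2, hsome⟩ := h
          rcases Nat.lt_or_ge x 2 with hlt | hge
          · have hx1' : x = 1 := by omega
            subst hx1'
            rw [show (mbar.pm (E.trunc hx2)).mA kA = none from hknone] at hsome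
            simp at hsome
          · exact hge
        · simp only [Set.mem_singleton_iff] at h
          omega
    have hU_mbar : Upay M G mbar kA (E.trunc h12) = M.dA kA * M.u kA tB := by
      rw [Upay_point M G E hG1 hG0 (E.trunc h12) ⟨h12, rfl⟩ mbar kA, hmtbar, hmE]
      norm_num
    have hU_m : Upay M G m kA (E.trunc h12) = M.u kA sB := by
      rw [Upay_point M G E hG1 hG0 (E.trunc h12) ⟨h12, rfl⟩ m kA, hm2k]
      have hle : matchTimeA m E kA 1 ≤ 1 := by
        apply Nat.sInf_le
        apply Set.mem_union_left
        exact ⟨le_rfl, h12, by rw [show (m.pm (E.trunc h12)).mA kA = some sB from hm1k]; rfl⟩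
      rw [Nat.sub_eq_zero_of_le hle, pow_zero, one_mul]
      rfl
    refine ⟨hU_mbar, ?_⟩
    rw [hU_m, hU_mbar]
    exact lt_trans hu_k2 hu_k1
  refine ⟨key, ?_⟩
  intro hm
  rw [DynStable] at hm
  have hsuppE1 : InSupport G (E.trunc h12) := ⟨E, ⟨h12, rfl⟩, (hG E).mpr rfl⟩
  have hkAv1 : kA ∈ availA m (E.trunc h12) := by
    rw [availA_one]
    rw [show (E.trunc h12).arrA ⟨0, one_pos⟩ = {kA, gA} from harrA0]
    simp
  obtain ⟨mbar, hmem, hle⟩ := (hm 1 le_rfl (by omega) (E.trunc h12) hsuppE1).1 kA hkAv1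
  exact absurd hle (not_le.mpr (key mbar hmem).2)

end DynMatch
end
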